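/- Let V: H_S → H_S⊗H_A be an isometry, C = Σ_i c_i P_i a self-adjoint operator with orthogonal spectral projections P_i summing to 1, and suppose there exist POVMs {X_i} on H_S and {Y_i} on H_A (X_i, Y_i ≥ 0, Σ_i X_i = 1, Σ_i Y_i = 1) with V†(X_i⊗1)V = P_i and V†(1⊗Y_i)V = P_i for all i. Then V†(X_i ⊗ Y_j)V = δ_{ij} P_i, and hence for every density operator ρ on H_S, Tr(VρV† (X_i⊗Y_j)) = δ_{ij} Tr(ρ P_i). -/

import Mathlib

open Matrix BigOperators Kronecker
open scoped ComplexOrder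

lemma kron_conjTranspose {m n m' n' : Type*} (A : Matrix m n ℂ) (B : Matrix m' n' ℂ) :
    (A ⊗ₖ B)ᴴ = Aᴴ ⊗ₖ Bᴴ := by
  ext ⟨i1, i2⟩ ⟨j1, j2⟩
  simp [conjTranspose_apply, kroneckerMap_apply, star_mul']

open scoped MatrixOrder in
lemma kron_posSemidef {m m' : ℕ} {A : Matrix (Fin m) (Fin m) ℂ}
    {B : Matrix (Fin m') (Fin m') ℂ} (hA : A.PosSemidef) (hB : B.PosSemidef) :
    (A ⊗ₖ B).PosSemidef := by
  have hAs : CFC.sqrt A * CFC.sqrt A = A := CFC.sqrt_mul_sqrt_self A hA.nonneg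
  have hBs : CFC.sqrt B * CFC.sqrt B = B := CFC.sqrt_mul_sqrt_self B hB.nonneg
  have h : A ⊗ₖ B = (CFC.sqrt A ⊗ₖ CFC.sqrt B)ᴴ * (CFC.sqrt A ⊗ₖ CFC.sqrt B) := by
    rw [kron_conjTranspose, (CFC.sqrt_nonneg A).posSemidef.1, (CFC.sqrt_nonneg B).posSemidef.1,
      ← mul_kronecker_mul, hAs, hBs]
  rw [h]
  exact posSemidef_conjTranspose_mul_self _

open scoped MatrixOrder in
lemma key_lemma {m n : Type*} [Fintype m] [DecidableEq m] [Fintype n] [DecidableEq n] {p : ℕ}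
    (W : Matrix m n ℂ)
    (Z : Fin p → Matrix m m ℂ)
    (Q : Fin p → Matrix n n ℂ)
    (hZpos : ∀ i, (Z i).PosSemidef)
    (hZsum : ∑ i, Z i = 1)
    (hQsa : ∀ i, (Q i)ᴴ = Q i)
    (hQorth : ∀ i j, i ≠ j → Q i * Q j = 0)
    (hZW : ∀ i, Wᴴ * Z i * W = Q i) :
    ∀ k i, Z k * W * Q i = if k = i then W * Q i else 0 := by
  have hzero : ∀ k i, k ≠ i → Z k * W * Q i = 0 := by
    intro k i hki
    set B := CFC.sqrt (Z k) with hB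
    have hBsa : Bᴴ = B := (CFC.sqrt_nonneg (Z k)).posSemidef.1
    have hBB : B * B = Z k := CFC.sqrt_mul_sqrt_self (Z k) (hZpos k).nonneg
    have hA : (B * W * Q i)ᴴ * (B * W * Q i) = 0 := by
      calc (B * W * Q i)ᴴ * (B * W * Q i)
          = Q i * (Wᴴ * Z k * W) * Q i := by
            simp only [conjTranspose_mul, hBsa, hQsa]
            rw [← hBB]; simp only [Matrix.mul_assoc]
        _ = 0 := by rw [hZW, hQorth i k (Ne.symm hki), zero_mul]
    have hA0 : B * W * Q i = 0 := conjTranspose_mul_self_eq_zero.mp hA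
    calc Z k * W * Q i = B * (B * W * Q i) := by rw [← hBB]; simp only [Matrix.mul_assoc]
      _ = 0 := by rw [hA0]; simp
  intro k i
  by_cases h : k = i
  · subst h
    simp only [if_pos rfl]
    have hs : ∑ j, Z j * W * Q k = W * Q k := by
      rw [← Matrix.sum_mul, ← Matrix.sum_mul, hZsum, Matrix.one_mul]
    rw [Finset.sum_eq_single k (fun j _ hj => hzero j k hj) (by simp)] at hs
    exact hs
  · rw [if_neg h]; exact hzero k i h

theorem duplicated_observables_correlated {nS nA p : ℕ}
    (V : Matrix (Fin nS × Fin nA) (Fin nS) ℂ)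
    (hViso : Vᴴ * V = 1)
    (c : Fin p → ℝ)
    (P : Fin p → Matrix (Fin nS) (Fin nS) ℂ)
    (hPsa : ∀ i, (P i)ᴴ = P i)
    (hPidem : ∀ i, P i * P i = P i)
    (hPorth : ∀ i j, i ≠ j → P i * P j = 0)
    (hPsum : ∑ i, P i = 1)
    (X : Fin p → Matrix (Fin nS) (Fin nS) ℂ)
    (hXpos : ∀ i, (X i).PosSemidef) (hXsum : ∑ i, X i = 1)
    (Y : Fin p → Matrix (Fin nA) (Fin nA) ℂ)
    (hYpos : ∀ i, (Y i).PosSemidef) (hYsum : ∑ i, Y i = 1)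
    (hX : ∀ i, Vᴴ * (X i ⊗ₖ (1 : Matrix (Fin nA) (Fin nA) ℂ)) * V = P i)
    (hY : ∀ i, Vᴴ * ((1 : Matrix (Fin nS) (Fin nS) ℂ) ⊗ₖ Y i) * V = P i) :
    (∀ i j, Vᴴ * (X i ⊗ₖ Y j) * V = if i = j then P i else 0) ∧
    (∀ (ρ : Matrix (Fin nS) (Fin nS) ℂ), ρ.PosSemidef → ρ.trace = 1 →
      ∀ i j, (V * ρ * Vᴴ * (X i ⊗ₖ Y j)).trace =
        if i = j then (ρ * P i).trace else 0) := by
  -- reindex Fin nS × Fin nA to Fin (nS * nA)? Not needed; key_lemma needs Fin m.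
  -- Generalize key_lemma usage: we stated it for Fin m, but V has index type Fin nS × Fin nA.
  -- Use the Y-version: (1 ⊗ₖ Y k) * V * P i = δ_{ki} V * P i.
  have hYkey : ∀ k i, ((1 : Matrix (Fin nS) (Fin nS) ℂ) ⊗ₖ Y k) * V * P i
      = if k = i then V * P i else 0 := by
    apply key_lemma V (fun k => (1 : Matrix (Fin nS) (Fin nS) ℂ) ⊗ₖ Y k) P
    · intro k; exact kron_posSemidef Matrix.PosSemidef.one (hYpos k)
    · have : ∑ k, (1 : Matrix (Fin nS) (Fin nS) ℂ) ⊗ₖ Y k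
          = (1 : Matrix (Fin nS) (Fin nS) ℂ) ⊗ₖ (∑ k, Y k) := by
        ext ⟨a, b⟩ ⟨c, d⟩
        simp [Matrix.sum_apply, kroneckerMap_apply, Finset.mul_sum]
      rw [this, hYsum, one_kronecker_one]
    · exact hPsa
    · exact hPorth
    · exact hY
  have main : ∀ i j, Vᴴ * (X i ⊗ₖ Y j) * V = if i = j then P i else 0 := by
    intro i j
    have hVP : V = ∑ m, V * P m := by rw [← Matrix.mul_sum, hPsum, Matrix.mul_one]
    have hdecomp : X i ⊗ₖ Y j =
        (X i ⊗ₖ (1 : Matrix (Fin nA) (Fin nA) ℂ)) *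
        ((1 : Matrix (Fin nS) (Fin nS) ℂ) ⊗ₖ Y j) := by
      rw [← mul_kronecker_mul, mul_one, one_mul]
    have h1 : ((1 : Matrix (Fin nS) (Fin nS) ℂ) ⊗ₖ Y j) * V = V * P j := by
      conv_lhs => rw [hVP, Matrix.mul_sum]
      simp_rw [← Matrix.mul_assoc, hYkey]
      rw [Finset.sum_eq_single j (by intro b _ hb; rw [if_neg (Ne.symm hb)]) (by simp),
        if_pos rfl]
    rw [hdecomp,
      show Vᴴ * ((X i ⊗ₖ (1 : Matrix (Fin nA) (Fin nA) ℂ)) *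
          ((1 : Matrix (Fin nS) (Fin nS) ℂ) ⊗ₖ Y j)) * V
        = (Vᴴ * (X i ⊗ₖ (1 : Matrix (Fin nA) (Fin nA) ℂ))) *
          (((1 : Matrix (Fin nS) (Fin nS) ℂ) ⊗ₖ Y j) * V) by simp only [Matrix.mul_assoc],
      h1,
      show (Vᴴ * (X i ⊗ₖ (1 : Matrix (Fin nA) (Fin nA) ℂ))) * (V * P j)
        = (Vᴴ * (X i ⊗ₖ (1 : Matrix (Fin nA) (Fin nA) ℂ)) * V) * P j by simp only [Matrix.mul_assoc],
      hX i]
    by_cases h : i = j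
    · subst h; rw [if_pos rfl, hPidem]
    · rw [if_neg h, hPorth i j h]
  refine ⟨main, ?_⟩
  intro ρ _ _ i j
  have : (V * ρ * Vᴴ * (X i ⊗ₖ Y j)).trace = (ρ * (Vᴴ * (X i ⊗ₖ Y j) * V)).trace := by
    rw [show V * ρ * Vᴴ * (X i ⊗ₖ Y j) = V * (ρ * (Vᴴ * (X i ⊗ₖ Y j))) by simp only [Matrix.mul_assoc],
      trace_mul_comm,
      show ρ * (Vᴴ * (X i ⊗ₖ Y j)) * V = ρ * (Vᴴ * (X i ⊗ₖ Y j) * V) by simp only [Matrix.mul_assoc]]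
  rw [this, main i j]
  by_cases h : i = j
  · simp [h]
  · simp [h]
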